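/- (Generalized quantum fluctuation theorem) Let N be a quantum channel on d×d complex matrices, γ a positive-definite density matrix with N(γ) positive definite, θ a real number, R_γ^θ the rotated Petz recovery map, and ρ a density matrix with ρ and N(ρ) positive definite. With eigenbases as above, define the forward quasi-probability P^{μ,ν}_{→,ij,k'l'} = p_μ ⟨φ'_ν| Π_{k'} N(Π_i |ψ_μ⟩⟨ψ_μ| Π_j) Π_{l'} |φ'_ν⟩, the backward quasi-probability P^{θ,μ,ν}_{←,ij,k'l'} = p'_ν ⟨ψ_μ| Π_i R_γ^θ(Π_{k'} |φ'_ν⟩⟨φ'_ν| Π_{l'}) Π_j |ψ_μ⟩, the complex forward entropy production σ(μ,i,j,ν,k',l') = (log p_μ − log p'_ν) − (1/2)log(r_i r_j/(r'_{k'} r'_{l'})) − (i/2)(log(r_i/r_j) − log(r'_{k'}/r'_{l'})), and the complex backward entropy production σ̃(μ,i,j,ν,k',l') = (log p'_ν − log p_μ) − (1/2)log(r'_{k'} r'_{l'}/(r_i r_j)) − (i/2)(log(r_j/r_i) − log(r'_{l'}/r'_{k'})). Then for every complex number s = s_R + i s_I: ∑_{tuples with σ = s} P^{μ,ν}_{→,ij,k'l'}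 = e^{s_R − 2iθ s_I} · ∑_{tuples with σ̃ = −conj(s)} P^{θ,μ,ν}_{←,ij,k'l'}; i.e., P_→(σ)/P_←^θ(−σ*) = e^{σ_R − 2iθσ_I}. -/

import Mathlib

open Matrix
open scoped ComplexOrder

/-- ⟨v|A|w⟩ -/
noncomputable def braket {d : ℕ} (v : Fin d → ℂ) (A : Matrix (Fin d) (Fin d) ℂ)
    (w : Fin d → ℂ) : ℂ :=
  dotProduct (star v) (A.mulVec w)

/-- |v⟩⟨w| -/
noncomputable def ketbra {d : ℕ} (v w : Fin d → ℂ) : Matrix (Fin d) (Fin d) ℂ :=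
  Matrix.vecMulVec v (star w)

/-- A quantum channel in Kraus form: N(X) = ∑ m, K m * X * (K m)ᴴ. -/
noncomputable def krausMap {d : ℕ} {ι : Type} [Fintype ι] (K : ι → Matrix (Fin d) (Fin d) ℂ)
    (X : Matrix (Fin d) (Fin d) ℂ) : Matrix (Fin d) (Fin d) ℂ :=
  ∑ m, K m * X * (K m)ᴴ

/-- The adjoint map: N†(X) = ∑ m, (K m)ᴴ * X * K m. -/
noncomputable def krausAdj {d : ℕ} {ι : Type} [Fintype ι] (K : ι → Matrix (Fin d) (Fin d) ℂ)
    (X : Matrix (Fin d) (Fin d) ℂ) : Matrix (Fin d) (Fin d) ℂ :=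
  ∑ m, (K m)ᴴ * X * K m

/-- An orthonormal family of vectors in ℂ^d. -/
def IsONB {d : ℕ} (e : Fin d → Fin d → ℂ) : Prop :=
  ∀ i j, dotProduct (star (e i)) (e j) = if i = j then 1 else 0

/-- For A = ∑ i, r i • |e i⟩⟨e i| with `e` orthonormal and `r` positive, the complex
matrix power A^z = exp (z log A) is given by A^z = ∑ i, (r i)^z • |e i⟩⟨e i|. -/
noncomputable def projPow {d : ℕ} (r : Fin d → ℝ) (e : Fin d → Fin d → ℂ) (z : ℂ) :
    Matrix (Fin d) (Fin d) ℂ :=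
  ∑ i, ((r i : ℂ) ^ z) • ketbra (e i) (e i)

/-- The two-point-measurement quasi-probability
P^{μ,ν}_{ij,k'l'} = p_μ ⟨φ'_ν| Π_{k'} N(Π_i |ψ_μ⟩⟨ψ_μ| Π_j) Π_{l'} |φ'_ν⟩. -/
noncomputable def tpmP {d : ℕ} {ι : Type} [Fintype ι] (K : ι → Matrix (Fin d) (Fin d) ℂ)
    (p : Fin d → ℝ) (ψ : Fin d → Fin d → ℂ) (φ : Fin d → Fin d → ℂ)
    (e : Fin d → Fin d → ℂ) (f : Fin d → Fin d → ℂ)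
    (μ ν i j k l : Fin d) : ℂ :=
  (p μ : ℂ) *
    braket (φ ν)
      (ketbra (f k) (f k) *
        krausMap K (ketbra (e i) (e i) * ketbra (ψ μ) (ψ μ) * ketbra (e j) (e j)) *
        ketbra (f l) (f l))
      (φ ν)

/-- The backward two-point-measurement quasi-probability
P^{μ,ν}_{←,ij,k'l'} = p'_ν ⟨ψ_μ| Π_i R(Π_{k'} |φ'_ν⟩⟨φ'_ν| Π_{l'}) Π_j |ψ_μ⟩
for a backward (recovery) channel R. -/
noncomputable def tpmPback {d : ℕ} (R : Matrix (Fin d) (Fin d) ℂ → Matrix (Fin d) (Fin d) ℂ)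
    (p' : Fin d → ℝ) (ψ : Fin d → Fin d → ℂ) (φ : Fin d → Fin d → ℂ)
    (e : Fin d → Fin d → ℂ) (f : Fin d → Fin d → ℂ)
    (μ ν i j k l : Fin d) : ℂ :=
  (p' ν : ℂ) *
    braket (ψ μ)
      (ketbra (e i) (e i) *
        R (ketbra (f k) (f k) * ketbra (φ ν) (φ ν) * ketbra (f l) (f l)) *
        ketbra (e j) (e j))
      (ψ μ)

/-- The rotated Petz recovery map, expressed through the eigendecompositions
γ = ∑ r_i |i⟩⟨i| and N(γ) = ∑ r'_k |k'⟩⟨k'|: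
R_γ^θ(X) = γ^{1/2+iθ} N†(N(γ)^{-1/2-iθ} X N(γ)^{-1/2+iθ}) γ^{1/2-iθ}. -/
noncomputable def rotPetzB {d : ℕ} {ι : Type} [Fintype ι] (K : ι → Matrix (Fin d) (Fin d) ℂ)
    (r : Fin d → ℝ) (e : Fin d → Fin d → ℂ) (r' : Fin d → ℝ) (f : Fin d → Fin d → ℂ)
    (θ : ℝ) (X : Matrix (Fin d) (Fin d) ℂ) : Matrix (Fin d) (Fin d) ℂ :=
  projPow r e (1/2 + θ * Complex.I) *
    krausAdj K (projPow r' f (-(1/2) - θ * Complex.I) * X *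
      projPow r' f (-(1/2) + θ * Complex.I)) *
    projPow r e (1/2 - θ * Complex.I)

/-- The complex forward entropy production σ(μ,i,j,ν,k',l'). -/
noncomputable def entProdFwd {d : ℕ} (p p' r r' : Fin d → ℝ) (μ ν i j k l : Fin d) : ℂ :=
  (((Real.log (p μ) - Real.log (p' ν)) -
      1/2 * Real.log (r i * r j / (r' k * r' l)) : ℝ) : ℂ) -
    Complex.I / 2 * ((Real.log (r i / r j) - Real.log (r' k / r' l) : ℝ) : ℂ)

/-- The complex backward entropy production σ̃(μ,i,j,ν,k',l'). -/
noncomputable def entProdBwd {d : ℕ} (p p' r r' : Fin d → ℝ) (μ ν i j k l : Fin d) : ℂ :=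
  (((Real.log (p' ν) - Real.log (p μ)) -
      1/2 * Real.log (r' k * r' l / (r i * r j)) : ℝ) : ℂ) -
    Complex.I / 2 * ((Real.log (r j / r i) - Real.log (r' l / r' k) : ℝ) : ℂ)


section Helpers

variable {d : ℕ}

private lemma ketbra_mul_ketbra (a b c g : Fin d → ℂ) :
    ketbra a b * ketbra c g = (star b ⬝ᵥ c) • ketbra a g := by
  ext x y
  simp only [ketbra, Matrix.mul_apply, vecMulVec_apply, Matrix.smul_apply, dotProduct,
    smul_eq_mul]
  rw [Finset.sum_mul]
  exact Finset.sum_congr rfl fun k _ => by ring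

private lemma mul_ketbra (M : Matrix (Fin d) (Fin d) ℂ) (a b : Fin d → ℂ) :
    M * ketbra a b = ketbra (M *ᵥ a) b := by
  ext x y
  simp only [ketbra, Matrix.mul_apply, vecMulVec_apply, mulVec, dotProduct, Finset.sum_mul]
  exact Finset.sum_congr rfl fun k _ => by ring

private lemma ketbra_mul (M : Matrix (Fin d) (Fin d) ℂ) (a b : Fin d → ℂ) :
    ketbra a b * M = ketbra a (Mᴴ *ᵥ b) := by
  ext x y
  simp only [ketbra, Matrix.mul_apply, vecMulVec_apply, mulVec, dotProduct, Pi.star_apply,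
    conjTranspose_apply, star_sum, star_mul', star_star, Finset.mul_sum]
  exact Finset.sum_congr rfl fun k _ => by ring

private lemma braket_ketbra (u a b v : Fin d → ℂ) :
    braket u (ketbra a b) v = (star u ⬝ᵥ a) * (star b ⬝ᵥ v) := by
  simp only [braket, ketbra, mulVec, dotProduct, vecMulVec_apply, Pi.star_apply,
    Finset.sum_mul, Finset.mul_sum]
  rw [Finset.sum_comm]
  exact Finset.sum_congr rfl fun k _ => Finset.sum_congr rfl fun x _ => by ring

private lemma braket_smul (u v : Fin d → ℂ) (c : ℂ) (A : Matrix (Fin d) (Fin d) ℂ) :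
    braket u (c • A) v = c * braket u A v := by
  simp only [braket, mulVec, dotProduct, Matrix.smul_apply, smul_eq_mul]
  rw [Finset.mul_sum]
  refine Finset.sum_congr rfl fun x _ => ?_
  rw [Finset.mul_sum, Finset.mul_sum, Finset.mul_sum]
  exact Finset.sum_congr rfl fun k _ => by ring

private lemma braket_sum {ι : Type} [Fintype ι] (u v : Fin d → ℂ)
    (A : ι → Matrix (Fin d) (Fin d) ℂ) :
    braket u (∑ m, A m) v = ∑ m, braket u (A m) v := by
  simp only [braket, mulVec, dotProduct, Finset.sum_apply, Matrix.sum_apply, Finset.sum_mul,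
    Finset.mul_sum]
  refine Eq.trans (Finset.sum_congr rfl fun x _ => Finset.sum_comm) Finset.sum_comm

private lemma projPow_mul_ketbra {r : Fin d → ℝ} {e : Fin d → Fin d → ℂ} (he : IsONB e)
    (z : ℂ) (i : Fin d) (b : Fin d → ℂ) :
    projPow r e z * ketbra (e i) b = ((r i : ℂ) ^ z) • ketbra (e i) b := by
  have he' : ∀ a b, star (e a) ⬝ᵥ e b = if a = b then 1 else 0 := he
  unfold projPow
  rw [Finset.sum_mul]
  simp only [smul_mul_assoc, ketbra_mul_ketbra, he', ite_smul, one_smul, zero_smul, smul_ite,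
    smul_zero]
  simp

private lemma ketbra_mul_projPow {r : Fin d → ℝ} {e : Fin d → Fin d → ℂ} (he : IsONB e)
    (z : ℂ) (i : Fin d) (a : Fin d → ℂ) :
    ketbra a (e i) * projPow r e z = ((r i : ℂ) ^ z) • ketbra a (e i) := by
  have he' : ∀ a b, star (e a) ⬝ᵥ e b = if a = b then 1 else 0 := he
  unfold projPow
  rw [Finset.mul_sum]
  simp only [mul_smul_comm, ketbra_mul_ketbra, he', ite_smul, one_smul, zero_smul, smul_ite,
    smul_zero]
  simp

private lemma krausMap_smul {ι : Type} [Fintype ι] (K : ι → Matrix (Fin d) (Fin d) ℂ) (c : ℂ)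
    (X : Matrix (Fin d) (Fin d) ℂ) : krausMap K (c • X) = c • krausMap K X := by
  simp [krausMap, mul_smul_comm, smul_mul_assoc, Finset.smul_sum]

private lemma krausMap_ketbra {ι : Type} [Fintype ι] (K : ι → Matrix (Fin d) (Fin d) ℂ)
    (a b : Fin d → ℂ) :
    krausMap K (ketbra a b) = ∑ m, ketbra (K m *ᵥ a) (K m *ᵥ b) := by
  unfold krausMap
  refine Finset.sum_congr rfl fun m _ => ?_
  rw [mul_ketbra, ketbra_mul, conjTranspose_conjTranspose]

private lemma krausAdj_smul {ι : Type} [Fintype ι] (K : ι → Matrix (Fin d) (Fin d) ℂ) (c : ℂ)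
    (X : Matrix (Fin d) (Fin d) ℂ) : krausAdj K (c • X) = c • krausAdj K X := by
  simp [krausAdj, mul_smul_comm, smul_mul_assoc, Finset.smul_sum]

private lemma krausAdj_ketbra {ι : Type} [Fintype ι] (K : ι → Matrix (Fin d) (Fin d) ℂ)
    (a b : Fin d → ℂ) :
    krausAdj K (ketbra a b) = ∑ m, ketbra ((K m)ᴴ *ᵥ a) ((K m)ᴴ *ᵥ b) := by
  unfold krausAdj
  refine Finset.sum_congr rfl fun m _ => ?_
  rw [mul_ketbra, ketbra_mul]

private lemma sandwich {r : Fin d → ℝ} {e : Fin d → Fin d → ℂ} (he : IsONB e)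
    (z w : ℂ) (i j : Fin d) (M : Matrix (Fin d) (Fin d) ℂ) :
    ketbra (e i) (e i) * (projPow r e z * M * projPow r e w) * ketbra (e j) (e j) =
      ((r i : ℂ) ^ z * (r j : ℂ) ^ w) •
        (ketbra (e i) (e i) * M * ketbra (e j) (e j)) := by
  rw [show ketbra (e i) (e i) * (projPow r e z * M * projPow r e w) * ketbra (e j) (e j)
      = (ketbra (e i) (e i) * projPow r e z) * M * (projPow r e w * ketbra (e j) (e j)) by
    simp only [mul_assoc]]
  simp only [ketbra_mul_projPow he, projPow_mul_ketbra he, smul_mul_assoc, mul_smul_comm,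
    smul_smul]
  rw [mul_comm (((r j : ℝ) : ℂ) ^ w) (((r i : ℝ) : ℂ) ^ z)]

variable {ι : Type} [Fintype ι]

private lemma tpmP_eq (K : ι → Matrix (Fin d) (Fin d) ℂ) (p : Fin d → ℝ)
    (ψ φ e f : Fin d → Fin d → ℂ) (μ ν i j k l : Fin d) :
    tpmP K p ψ φ e f μ ν i j k l =
      (p μ : ℂ) * ((star (e i) ⬝ᵥ ψ μ) * (star (ψ μ) ⬝ᵥ e j) *
        ((star (φ ν) ⬝ᵥ f k) * (star (f l) ⬝ᵥ φ ν)) *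
        ∑ m, (star (f k) ⬝ᵥ (K m *ᵥ e i)) * (star (K m *ᵥ e j) ⬝ᵥ f l)) := by
  unfold tpmP
  rw [ketbra_mul_ketbra, smul_mul_assoc, ketbra_mul_ketbra, smul_smul, krausMap_smul,
    krausMap_ketbra, mul_smul_comm, smul_mul_assoc, braket_smul, Finset.mul_sum,
    Finset.sum_mul, braket_sum]
  simp only [ketbra_mul_ketbra, smul_mul_assoc, smul_smul, braket_smul, braket_ketbra]
  conv_lhs => rw [Finset.mul_sum, Finset.mul_sum]
  conv_rhs => rw [Finset.mul_sum, Finset.mul_sum]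
  exact Finset.sum_congr rfl fun m _ => by ring

private lemma tpmPback_eq (K : ι → Matrix (Fin d) (Fin d) ℂ) (r r' : Fin d → ℝ) (θ : ℝ)
    (p' : Fin d → ℝ) (ψ φ : Fin d → Fin d → ℂ) {e f : Fin d → Fin d → ℂ}
    (he : IsONB e) (hf : IsONB f) (μ ν i j k l : Fin d) :
    tpmPback (rotPetzB K r e r' f θ) p' ψ φ e f μ ν i j k l =
      (p' ν : ℂ) * ((star (ψ μ) ⬝ᵥ e i) * (star (e j) ⬝ᵥ ψ μ) *
        ((star (f k) ⬝ᵥ φ ν) * (star (φ ν) ⬝ᵥ f l)) *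
        (((r' k : ℂ) ^ (-(1/2 : ℂ) - θ * Complex.I)) *
         ((r' l : ℂ) ^ (-(1/2 : ℂ) + θ * Complex.I)) *
         ((r i : ℂ) ^ ((1/2 : ℂ) + θ * Complex.I)) *
         ((r j : ℂ) ^ ((1/2 : ℂ) - θ * Complex.I))) *
        ∑ m, (star (e i) ⬝ᵥ ((K m)ᴴ *ᵥ f k)) * (star ((K m)ᴴ *ᵥ f l) ⬝ᵥ e j)) := by
  unfold tpmPback rotPetzB
  simp only [ketbra_mul_ketbra, smul_mul_assoc, mul_smul_comm, smul_smul,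
    projPow_mul_ketbra hf, ketbra_mul_projPow hf, krausAdj_smul, krausAdj_ketbra,
    Finset.mul_sum, Finset.sum_mul, Finset.smul_sum, sandwich he, braket_sum, braket_smul,
    braket_ketbra]
  exact Finset.sum_congr rfl fun m _ => by ring

private lemma bwd_eq_neg_conj_fwd (p p' r r' : Fin d → ℝ)
    (hr : ∀ i, 0 < r i) (hr' : ∀ k, 0 < r' k)
    (μ ν i j k l : Fin d) :
    entProdBwd p p' r r' μ ν j i l k =
      -(starRingEnd ℂ) (entProdFwd p p' r r' μ ν i j k l) := by
  unfold entProdFwd entProdBwd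
  rw [Real.log_div (mul_pos (hr' l) (hr' k)).ne' (mul_pos (hr j) (hr i)).ne',
    Real.log_div (hr i).ne' (hr j).ne', Real.log_div (hr' k).ne' (hr' l).ne',
    Real.log_div (mul_pos (hr i) (hr j)).ne' (mul_pos (hr' k) (hr' l)).ne',
    Real.log_mul (hr' l).ne' (hr' k).ne', Real.log_mul (hr j).ne' (hr i).ne',
    Real.log_mul (hr i).ne' (hr j).ne', Real.log_mul (hr' k).ne' (hr' l).ne']
  simp only [map_add, map_sub, _root_.map_mul, map_div₀, map_neg, map_ofNat, Complex.conj_I,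
    Complex.conj_ofReal]
  push_cast
  ring

private lemma fwd_re (p p' r r' : Fin d → ℝ) (μ ν i j k l : Fin d) :
    (entProdFwd p p' r r' μ ν i j k l).re =
      (Real.log (p μ) - Real.log (p' ν)) - 1/2 * Real.log (r i * r j / (r' k * r' l)) := by
  simp [entProdFwd, Complex.div_re]

private lemma fwd_im (p p' r r' : Fin d → ℝ) (μ ν i j k l : Fin d) :
    (entProdFwd p p' r r' μ ν i j k l).im =
      -((Real.log (r i / r j) - Real.log (r' k / r' l)) / 2) := by
  simp [entProdFwd, Complex.div_im]
  ring

private lemma rpow_c (x : ℝ) (hx : 0 < x) (z : ℂ) :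
    ((x : ℝ) : ℂ) ^ z = Complex.exp (z * ((Real.log x : ℝ) : ℂ)) := by
  rw [Complex.cpow_def_of_ne_zero (by exact_mod_cast hx.ne'), ← Complex.ofReal_log hx.le,
    mul_comm]

private lemma ofReal_exp_log (x : ℝ) (hx : 0 < x) :
    ((x : ℝ) : ℂ) = Complex.exp ((Real.log x : ℝ) : ℂ) := by
  rw [← Complex.ofReal_exp, Real.exp_log hx]

private lemma key_scalar (p p' r r' : Fin d → ℝ)
    (hp : ∀ μ, 0 < p μ) (hp' : ∀ ν, 0 < p' ν) (hr : ∀ i, 0 < r i) (hr' : ∀ k, 0 < r' k)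
    (θ : ℝ) (μ ν i j k l : Fin d) :
    Complex.exp ((((entProdFwd p p' r r' μ ν i j k l).re : ℝ) : ℂ) -
        2 * (θ : ℂ) * (((entProdFwd p p' r r' μ ν i j k l).im : ℝ) : ℂ) * Complex.I) *
      ((p' ν : ℂ) * (((r' l : ℂ)) ^ (-(1/2 : ℂ) - θ * Complex.I) *
        ((r' k : ℂ)) ^ (-(1/2 : ℂ) + θ * Complex.I) *
        ((r j : ℂ)) ^ ((1/2 : ℂ) + θ * Complex.I) *
        ((r i : ℂ)) ^ ((1/2 : ℂ) - θ * Complex.I))) = (p μ : ℂ) := by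
  rw [fwd_re, fwd_im, ofReal_exp_log _ (hp' ν), ofReal_exp_log _ (hp μ),
    rpow_c _ (hr' l), rpow_c _ (hr' k), rpow_c _ (hr j), rpow_c _ (hr i),
    ← Complex.exp_add, ← Complex.exp_add, ← Complex.exp_add, ← Complex.exp_add,
    ← Complex.exp_add]
  congr 1
  rw [Real.log_div (mul_pos (hr i) (hr j)).ne' (mul_pos (hr' k) (hr' l)).ne',
    Real.log_div (hr i).ne' (hr j).ne', Real.log_div (hr' k).ne' (hr' l).ne',
    Real.log_mul (hr i).ne' (hr j).ne', Real.log_mul (hr' k).ne' (hr' l).ne']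
  push_cast
  ring

end Helpers

/-- generalized quantum fluctuation theorem,
P_→(σ) = e^{σ_R − 2iθσ_I} P_←^θ(−σ*). -/
theorem generalized_quantum_fluctuation_theorem
    {d : ℕ} {ι : Type} [Fintype ι] (K : ι → Matrix (Fin d) (Fin d) ℂ)
    (hK : ∑ m, (K m)ᴴ * K m = 1)
    (r : Fin d → ℝ) (e : Fin d → Fin d → ℂ) (hr : ∀ i, 0 < r i) (he : IsONB e)
    (hrtr : ∑ i, r i = 1)
    (r' : Fin d → ℝ) (f : Fin d → Fin d → ℂ) (hr' : ∀ k, 0 < r' k) (hf : IsONB f)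
    (hNγ : krausMap K (∑ i, ((r i : ℂ)) • ketbra (e i) (e i)) =
      ∑ k, ((r' k : ℂ)) • ketbra (f k) (f k))
    (θ : ℝ)
    (ρ : Matrix (Fin d) (Fin d) ℂ)
    (p : Fin d → ℝ) (ψ : Fin d → Fin d → ℂ) (hp : ∀ μ, 0 < p μ) (hψ : IsONB ψ)
    (hρ : ρ = ∑ μ, ((p μ : ℂ)) • ketbra (ψ μ) (ψ μ))
    (p' : Fin d → ℝ) (φ : Fin d → Fin d → ℂ) (hp' : ∀ ν, 0 < p' ν) (hφ : IsONB φ)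
    (hNρ : krausMap K ρ = ∑ ν, ((p' ν : ℂ)) • ketbra (φ ν) (φ ν)) :
    ∀ s : ℂ,
      (∑ μ, ∑ ν, ∑ i, ∑ j, ∑ k, ∑ l,
        if entProdFwd p p' r r' μ ν i j k l = s then
          tpmP K p ψ φ e f μ ν i j k l
        else 0) =
      Complex.exp ((s.re : ℂ) - 2 * (θ : ℂ) * (s.im : ℂ) * Complex.I) *
        (∑ μ, ∑ ν, ∑ i, ∑ j, ∑ k, ∑ l,
          if entProdBwd p p' r r' μ ν i j k l = -(starRingEnd ℂ) s then
            tpmPback (rotPetzB K r e r' f θ) p' ψ φ e f μ ν i j k l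
          else 0) := by
  intro s
  rw [Finset.mul_sum]
  refine Finset.sum_congr rfl fun μ _ => ?_
  rw [Finset.mul_sum]
  refine Finset.sum_congr rfl fun ν _ => ?_
  have term : ∀ i j k l : Fin d,
      (if entProdFwd p p' r r' μ ν i j k l = s then tpmP K p ψ φ e f μ ν i j k l else 0) =
      Complex.exp ((s.re : ℂ) - 2 * (θ : ℂ) * (s.im : ℂ) * Complex.I) *
        (if entProdBwd p p' r r' μ ν j i l k = -(starRingEnd ℂ) s then
          tpmPback (rotPetzB K r e r' f θ) p' ψ φ e f μ ν j i l k
        else 0) := by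
    intro i j k l
    by_cases h : entProdFwd p p' r r' μ ν i j k l = s
    · rw [if_pos h, if_pos (by rw [bwd_eq_neg_conj_fwd p p' r r' hr hr', h])]
      subst h
      rw [tpmP_eq, tpmPback_eq K r r' θ p' ψ φ he hf μ ν j i l k]
      have hS : ∀ m : ι,
          (star (e j) ⬝ᵥ ((K m)ᴴ *ᵥ f l)) * (star ((K m)ᴴ *ᵥ f k) ⬝ᵥ e i) =
          (star (f k) ⬝ᵥ (K m *ᵥ e i)) * (star (K m *ᵥ e j) ⬝ᵥ f l) := by
        intro m
        rw [dotProduct_mulVec (star (e j)), ← star_mulVec, star_mulVec ((K m)ᴴ),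
          conjTranspose_conjTranspose, ← dotProduct_mulVec]
        ring
      simp only [hS]
      have hk := key_scalar p p' r r' hp hp' hr hr' θ μ ν i j k l
      set E := Complex.exp
        ((((entProdFwd p p' r r' μ ν i j k l).re : ℝ) : ℂ) -
          2 * (θ : ℂ) * (((entProdFwd p p' r r' μ ν i j k l).im : ℝ) : ℂ) * Complex.I) with hE
      linear_combination
        (-((star (e i) ⬝ᵥ ψ μ) * (star (ψ μ) ⬝ᵥ e j) *
          ((star (φ ν) ⬝ᵥ f k) * (star (f l) ⬝ᵥ φ ν)) *
          ∑ m, (star (f k) ⬝ᵥ (K m *ᵥ e i)) * (star (K m *ᵥ e j) ⬝ᵥ f l))) * hk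
    · rw [if_neg h, if_neg ?_, mul_zero]
      intro hc
      rw [bwd_eq_neg_conj_fwd p p' r r' hr hr'] at hc
      exact h ((starRingEnd ℂ).injective (neg_inj.mp hc))
  calc (∑ i, ∑ j, ∑ k, ∑ l,
        if entProdFwd p p' r r' μ ν i j k l = s then tpmP K p ψ φ e f μ ν i j k l else 0)
      = ∑ i, ∑ j, ∑ k, ∑ l,
          Complex.exp ((s.re : ℂ) - 2 * (θ : ℂ) * (s.im : ℂ) * Complex.I) *
            (if entProdBwd p p' r r' μ ν j i l k = -(starRingEnd ℂ) s then
              tpmPback (rotPetzB K r e r' f θ) p' ψ φ e f μ ν j i l k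
            else 0) := by
        refine Finset.sum_congr rfl fun i _ => Finset.sum_congr rfl fun j _ =>
          Finset.sum_congr rfl fun k _ => Finset.sum_congr rfl fun l _ => term i j k l
    _ = ∑ i, ∑ j, ∑ k, ∑ l,
          Complex.exp ((s.re : ℂ) - 2 * (θ : ℂ) * (s.im : ℂ) * Complex.I) *
            (if entProdBwd p p' r r' μ ν i j k l = -(starRingEnd ℂ) s then
              tpmPback (rotPetzB K r e r' f θ) p' ψ φ e f μ ν i j k l
            else 0) := by
        rw [Finset.sum_comm]
        refine Finset.sum_congr rfl fun i _ => Finset.sum_congr rfl fun j _ => ?_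
        exact Finset.sum_comm
    _ = Complex.exp ((s.re : ℂ) - 2 * (θ : ℂ) * (s.im : ℂ) * Complex.I) *
          ∑ i, ∑ j, ∑ k, ∑ l,
            (if entProdBwd p p' r r' μ ν i j k l = -(starRingEnd ℂ) s then
              tpmPback (rotPetzB K r e r' f θ) p' ψ φ e f μ ν i j k l
            else 0) := by
        simp only [Finset.mul_sum]
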